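/- For the dcpo's P₁ and P₂ described in the context, the set A = ↓{(a,a) : a ∈ max B} ⊆ P₁ × P₂ is Scott closed; that is, A is a lower set in the product order and for every directed subset D of A, sup D ∈ A. -/
import Mathlib


/-- A subset `D` is directed with respect to the relation `le`:
it is nonempty and any two elements have an upper bound in `D`. -/
def DirectedOn' {α : Type*} (le : α → α → Prop) (D : Set α) : Prop :=
  D.Nonempty ∧ ∀ x ∈ D, ∀ y ∈ D, ∃ z ∈ D, le x z ∧ le y z

/-- `u` is a least upper bound of `D` with respect to the relation `le`. -/
def IsLub' {α : Type*} (le : α → α → Prop) (D : Set α) (u : α) : Prop :=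
  (∀ x ∈ D, le x u) ∧ ∀ v, (∀ x ∈ D, le x v) → le u v

/-- Every directed subset has a least upper bound: `le` makes the carrier a dcpo. -/
def IsDcpoRel {α : Type*} (le : α → α → Prop) : Prop :=
  ∀ D : Set α, DirectedOn' le D → ∃ u, IsLub' le D u

/-- `U` is Scott open with respect to `le`: it is an upper set and every directed subset
whose least upper bound lies in `U` meets `U`. -/
def ScottOpen' {α : Type*} (le : α → α → Prop) (U : Set α) : Prop :=
  (∀ x y, le x y → x ∈ U → y ∈ U) ∧
    ∀ D u, DirectedOn' le D → IsLub' le D u → u ∈ U → (D ∩ U).Nonempty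

/-- `A` is Scott closed with respect to `le`: it is a lower set and contains the least upper
bounds of its directed subsets. -/
def ScottClosed' {α : Type*} (le : α → α → Prop) (A : Set α) : Prop :=
  (∀ x y, le x y → y ∈ A → x ∈ A) ∧
    ∀ D u, D ⊆ A → DirectedOn' le D → IsLub' le D u → u ∈ A

/-- Sobriety of the Scott space of `le`: the space is T₀ and every irreducible Scott closed
subset is the Scott closure `↓x = {y | le y x}` of a unique point `x`. -/
def SoberRel {α : Type*} (le : α → α → Prop) : Prop :=
  (∀ x y : α, (∀ U : Set α, ScottOpen' le U → (x ∈ U ↔ y ∈ U)) → x = y) ∧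
    ∀ C : Set α, ScottClosed' le C → C.Nonempty →
      (∀ A B : Set α, ScottClosed' le A → ScottClosed' le B → C ⊆ A ∪ B → C ⊆ A ∨ C ⊆ B) →
      ∃! x : α, C = {y | le y x}

/-! ### The posets `M`, `L`, `B`, `P₁`, `P₂` of Miao, Xi, Jia, Li, Zhao -/

/-- `ℕ^{<ℕ}`: nonempty finite words over `ℕ`. -/
abbrev NWord : Type := {l : List ℕ // l ≠ []}

/-- The prefix order on nonempty finite words. -/
def wordLE (v w : NWord) : Prop := v.1 <+: w.1

/-- The word of length 1 corresponding to a natural number. -/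
def word1 (k : ℕ) : NWord := ⟨[k], by simp⟩

/-- `s.k`: the word `s` extended by the letter `k`. -/
def wordSnoc (s : NWord) (k : ℕ) : NWord := ⟨s.1 ++ [k], by simp⟩

/-- The poset `M = ℕ ⊔ ℕ^{<ℕ}`, the disjoint sum of `ℕ` and the words. -/
abbrev Mt : Type := ℕ ⊕ NWord

/-- The (disjoint sum) order on `M`. -/
def Mle : Mt → Mt → Prop
  | Sum.inl a, Sum.inl b => a ≤ b
  | Sum.inr v, Sum.inr w => wordLE v w
  | _, _ => False

/-- The strict order on `M`. -/
def Mlt (x y : Mt) : Prop := Mle x y ∧ x ≠ y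

/-- Pairs `(a, b)` of naturals with `a < b`. -/
abbrev Pairt : Type := {p : ℕ × ℕ // p.1 < p.2}

/-- The poset `L = ({(a,b) : a < b} × M) ∪ {⊤}`; `none` is the top element `⊤` and
`some (p, x)` is the element `x_{a,b}` for `p = (a,b)`. -/
abbrev Lt : Type := Option (Pairt × Mt)

/-- The strict order on `L`: everything (other than `⊤`) is strictly below `⊤ = none`, and
`x_{a,b} < y_{a,b}` iff `x < y` in `M` (with the same tag `(a,b)`). -/
def Llt (u v : Lt) : Prop :=
  (u ≠ none ∧ v = none) ∨ ∃ p x y, u = some (p, x) ∧ v = some (p, y) ∧ Mlt x y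

/-- The carrier of the poset `B = ℕ × ℕ × L`. -/
abbrev Bt : Type := ℕ × ℕ × Lt

/-- `⊏₁`: `(m, n, ℓ) ⊏₁ (m, n, ℓ')` whenever `ℓ < ℓ'` in `L`. -/
def sq1 : Bt → Bt → Prop := fun x y =>
  ∃ m n u v, x = (m, n, u) ∧ y = (m, n, v) ∧ Llt u v

/-- `⊏₂`: `(a, n, x_{a,b}) ⊏₂ (f_{a,b}(x), n+1, ⊤)` for a word `x ∈ ℕ^{<ℕ}`. -/
def sq2 (f : Pairt → NWord → ℕ) : Bt → Bt → Prop := fun x y =>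
  ∃ (n : ℕ) (p : Pairt) (w : NWord),
    x = (p.1.1, n, some (p, Sum.inr w)) ∧ y = (f p w, n + 1, (none : Lt))

/-- `⊏₃`: `(b, n, x_{a,b}) ⊏₃ (f_{a,b}(x), n+1, ⊤)` for `x ∈ ℕ`, regarded as a word of
length 1. -/
def sq3 (f : Pairt → NWord → ℕ) : Bt → Bt → Prop := fun x y =>
  ∃ (n k : ℕ) (p : Pairt),
    x = (p.1.2, n, some (p, Sum.inl k)) ∧ y = (f p (word1 k), n + 1, (none : Lt))

/-- `⊏₄`: `(f_{a,b}(s), n, x_{a,b}) ⊏₄ (f_{a,b}(s.x), n, ⊤)` for a word `s` and `x ∈ ℕ`. -/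
def sq4 (f : Pairt → NWord → ℕ) : Bt → Bt → Prop := fun x y =>
  ∃ (n k : ℕ) (p : Pairt) (s : NWord),
    x = (f p s, n, some (p, Sum.inl k)) ∧ y = (f p (wordSnoc s k), n, (none : Lt))

/-- `⊏ = ⊏₁ ∪ ⊏₂ ∪ ⊏₃ ∪ ⊏₄ ∪ ⊏₁;⊏₂ ∪ ⊏₁;⊏₃ ∪ ⊏₁;⊏₄`. -/
def Bsq (f : Pairt → NWord → ℕ) : Bt → Bt → Prop := fun x y =>
  sq1 x y ∨ sq2 f x y ∨ sq3 f x y ∨ sq4 f x y ∨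
    (∃ z, sq1 x z ∧ sq2 f z y) ∨ (∃ z, sq1 x z ∧ sq3 f z y) ∨ (∃ z, sq1 x z ∧ sq4 f z y)

/-- The order `⊑` on `B`: the reflexive closure of `⊏`. -/
def Ble (f : Pairt → NWord → ℕ) (x y : Bt) : Prop := x = y ∨ Bsq f x y

/-- The hypotheses on the data `i`, `f`: `i` is an injection into `P(ℕ)` with pairwise
disjoint values satisfying `n < k` for all `k ∈ i (m, n)`, and each `f_{a,b}` is a monotone
injection of `ℕ^{<ℕ}` (with the prefix order) into `i (a, b)`. -/
structure IFData (i : Pairt → Set ℕ) (f : Pairt → NWord → ℕ) : Prop where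
  inj : Function.Injective i
  disj : ∀ p q : Pairt, p ≠ q → i p ∩ i q = ∅
  gt : ∀ p : Pairt, ∀ k ∈ i p, p.1.2 < k
  mem : ∀ p w, f p w ∈ i p
  finj : ∀ p, Function.Injective (f p)
  fmono : ∀ p v w, wordLE v w → f p v ≤ f p w

/-- The carrier of the poset `P₁ = (ℕ^ℕ × ℕ) ∪ B ∪ {⊤₁}`. -/
abbrev P1t : Type := ((ℕ → ℕ) × ℕ) ⊕ Bt ⊕ Unit

/-- The top element `⊤₁` of `P₁`. -/
def P1top : P1t := Sum.inr (Sum.inr ())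

/-- The inclusion of `B` into `P₁`. -/
def P1ofB (b : Bt) : P1t := Sum.inr (Sum.inl b)

/-- The strict order `<₁ ∪ <₂ ∪ <₃ ∪ <₄ ∪ <₁;<₃` of `P₁`:
`(g, n) <₁ (g, m)` iff `n < m`; `<₂` is `⊏` on `B`; `(g, n) <₃ (g(n), n, ⊤)`;
`x <₄ ⊤₁` for `x ≠ ⊤₁`; and `(g, n) <₁;<₃ (g(m), m, ⊤)` for `n < m`. -/
def P1lt (f : Pairt → NWord → ℕ) : P1t → P1t → Prop := fun x y =>
  (∃ (g : ℕ → ℕ) (n m : ℕ), x = Sum.inl (g, n) ∧ y = Sum.inl (g, m) ∧ n < m) ∨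
  (∃ b c : Bt, x = P1ofB b ∧ y = P1ofB c ∧ Bsq f b c) ∨
  (∃ (g : ℕ → ℕ) (n : ℕ), x = Sum.inl (g, n) ∧ y = P1ofB (g n, n, (none : Lt))) ∨
  (x ≠ P1top ∧ y = P1top) ∨
  (∃ (g : ℕ → ℕ) (n m : ℕ), x = Sum.inl (g, n) ∧ n < m ∧ y = P1ofB (g m, m, (none : Lt)))

/-- The order of `P₁`: the reflexive closure of the strict order. -/
def P1le (f : Pairt → NWord → ℕ) (x y : P1t) : Prop := x = y ∨ P1lt f x y

/-- `X = {g : ℕ → ⋃ₙ Eₙ : g(n) ∈ Eₙ}` where `Eₙ = i(φ(n))`. -/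
def Xt (i : Pairt → Set ℕ) (φ : ℕ → Pairt) : Type := {g : ℕ → ℕ // ∀ n, g n ∈ i (φ n)}

/-- The carrier of the poset `P₂ = (X × ℕ × ℕ) ∪ B ∪ {⊤₂}`. -/
abbrev P2t (i : Pairt → Set ℕ) (φ : ℕ → Pairt) : Type := (Xt i φ × ℕ × ℕ) ⊕ Bt ⊕ Unit

/-- The top element `⊤₂` of `P₂`. -/
def P2top (i : Pairt → Set ℕ) (φ : ℕ → Pairt) : P2t i φ := Sum.inr (Sum.inr ())

/-- The inclusion of `B` into `P₂`. -/
def P2ofB (i : Pairt → Set ℕ) (φ : ℕ → Pairt) (b : Bt) : P2t i φ := Sum.inr (Sum.inl b)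

/-- The strict order `<₁ ∪ <₂ ∪ <₃ ∪ <₄ ∪ <₁;<₃` of `P₂`:
`(g, n, k) <₁ (g, m, k)` iff `n < m`; `<₂` is `⊏` on `B`; `(g, n, k) <₃ (g(n), k, ⊤)`;
`x <₄ ⊤₂` for `x ≠ ⊤₂`; and `(g, n, k) <₁;<₃ (g(m), k, ⊤)` for `n < m`. -/
def P2lt (i : Pairt → Set ℕ) (φ : ℕ → Pairt) (f : Pairt → NWord → ℕ) :
    P2t i φ → P2t i φ → Prop := fun x y =>
  (∃ (g : Xt i φ) (n m k : ℕ), x = Sum.inl (g, n, k) ∧ y = Sum.inl (g, m, k) ∧ n < m) ∨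
  (∃ b c : Bt, x = P2ofB i φ b ∧ y = P2ofB i φ c ∧ Bsq f b c) ∨
  (∃ (g : Xt i φ) (n k : ℕ), x = Sum.inl (g, n, k) ∧ y = P2ofB i φ (g.1 n, k, (none : Lt))) ∨
  (x ≠ P2top i φ ∧ y = P2top i φ) ∨
  (∃ (g : Xt i φ) (n m k : ℕ), x = Sum.inl (g, n, k) ∧ n < m ∧
    y = P2ofB i φ (g.1 m, k, (none : Lt)))

/-- The order of `P₂`: the reflexive closure of the strict order. -/
def P2le (i : Pairt → Set ℕ) (φ : ℕ → Pairt) (f : Pairt → NWord → ℕ) (x y : P2t i φ) : Prop :=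
  x = y ∨ P2lt i φ f x y

/-- The componentwise order on the product poset `P₁ × P₂`. -/
def prodLe (i : Pairt → Set ℕ) (φ : ℕ → Pairt) (f : Pairt → NWord → ℕ)
    (x y : P1t × P2t i φ) : Prop :=
  P1le f x.1 y.1 ∧ P2le i φ f x.2 y.2

/-- `max B`: the set of maximal elements of the poset `B`. -/
def maxB (f : Pairt → NWord → ℕ) : Set Bt := {b : Bt | ∀ c : Bt, Ble f b c → b = c}

/-- The set `A = ↓{(a, a) : a ∈ max B} ⊆ P₁ × P₂`: the lower set, in the product order,
generated by the diagonal copies of the maximal elements of `B`. -/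
def Adiag (i : Pairt → Set ℕ) (φ : ℕ → Pairt) (f : Pairt → NWord → ℕ) :
    Set (P1t × P2t i φ) :=
  {q : P1t × P2t i φ | ∃ b ∈ maxB f, prodLe i φ f q (P1ofB b, P2ofB i φ b)}

section AuxProofs

variable {i : Pairt → Set ℕ} {f : Pairt → NWord → ℕ} {φ : ℕ → Pairt}

lemma mle_refl (x : Mt) : Mle x x := by
  cases x with
  | inl a => exact le_refl a
  | inr w => exact List.prefix_refl _

lemma mle_trans {x y z : Mt} (h1 : Mle x y) (h2 : Mle y z) : Mle x z := by
  cases x <;> cases y <;> cases z <;> simp_all [Mle, wordLE] <;> try exact le_trans h1 h2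
  exact h1.trans h2

def mmu : Mt → ℕ := fun x => match x with | .inl a => a | .inr w => w.1.length

lemma mlt_mu {x y : Mt} (h : Mlt x y) : mmu x < mmu y := by
  obtain ⟨hle, hne⟩ := h
  cases x <;> cases y <;> simp_all [Mle, wordLE, mmu]
  · omega
  · rename_i w w'
    refine lt_of_le_of_ne hle.length_le fun hl => hne (Subtype.ext (hle.eq_of_length hl))

lemma mlt_trans {x y z : Mt} (h1 : Mlt x y) (h2 : Mlt y z) : Mlt x z :=
  ⟨mle_trans h1.1 h2.1, fun hxz => absurd (hxz ▸ (lt_trans (mlt_mu h1) (mlt_mu h2))) (lt_irrefl _)⟩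

lemma llt_trans {u v w : Lt} (h1 : Llt u v) (h2 : Llt v w) : Llt u w := by
  rcases h1 with ⟨hne, rfl⟩ | ⟨p, x, y, rfl, rfl, hxy⟩
  · rcases h2 with ⟨hne', _⟩ | ⟨p, x, y, h, _, _⟩ <;> simp_all
  · rcases h2 with ⟨-, rfl⟩ | ⟨p', x', y', hx', rfl, hxy'⟩
    · exact Or.inl ⟨Option.some_ne_none _, rfl⟩
    · obtain ⟨rfl, rfl⟩ : p = p' ∧ y = x' := by
        simpa only [Option.some.injEq, Prod.mk.injEq] using hx'
      exact Or.inr ⟨p, x, y', rfl, rfl, mlt_trans hxy hxy'⟩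

lemma sq1_mk {m n : ℕ} {p : Pairt} {x y : Mt} (h : Mlt x y) :
    sq1 (m, n, some (p, x)) (m, n, some (p, y)) :=
  ⟨m, n, _, _, rfl, rfl, Or.inr ⟨p, x, y, rfl, rfl, h⟩⟩

lemma sq1_hat {m n : ℕ} {pr : Pairt × Mt} :
    sq1 (m, n, some pr) (m, n, (none : Lt)) :=
  ⟨m, n, _, _, rfl, rfl, Or.inl ⟨Option.some_ne_none _, rfl⟩⟩

lemma bsq_hat {m n : ℕ} {pr : Pairt × Mt} :
    Bsq f (m, n, some pr) (m, n, (none : Lt)) := Or.inl sq1_hat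

lemma mlt_of_ne_inr {w w' : NWord} (h : Mle (Sum.inr w) (Sum.inr w')) (hne : w ≠ w') :
    Mlt (Sum.inr w : Mt) (Sum.inr w') := ⟨h, by simp [hne]⟩

lemma bsq_sq2' {n : ℕ} {p : Pairt} {x : Mt} {w' : NWord} (h : Mle x (Sum.inr w')) :
    Bsq f (p.1.1, n, some (p, x)) (f p w', n + 1, (none : Lt)) := by
  obtain (a | w) := x
  · exact absurd h (fun h => h)
  · by_cases hw : w = w'
    · subst hw; exact Or.inr (Or.inl ⟨n, p, w, rfl, rfl⟩)
    · exact Or.inr (Or.inr (Or.inr (Or.inr (Or.inl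
        ⟨(p.1.1, n, some (p, Sum.inr w')), sq1_mk (mlt_of_ne_inr h hw), ⟨n, p, w', rfl, rfl⟩⟩))))

lemma bsq_sq3' {n k' : ℕ} {p : Pairt} {x : Mt} (h : Mle x (Sum.inl k')) :
    Bsq f (p.1.2, n, some (p, x)) (f p (word1 k'), n + 1, (none : Lt)) := by
  obtain (a | w) := x
  · by_cases hk : a = k'
    · subst hk; exact Or.inr (Or.inr (Or.inl ⟨n, a, p, rfl, rfl⟩))
    · exact Or.inr (Or.inr (Or.inr (Or.inr (Or.inr (Or.inl
        ⟨(p.1.2, n, some (p, Sum.inl k')), sq1_mk ⟨h, by simp [hk]⟩, ⟨n, k', p, rfl, rfl⟩⟩)))))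
  · exact absurd h (fun h => h)

lemma bsq_sq4' {n k' : ℕ} {p : Pairt} {s : NWord} {x : Mt} (h : Mle x (Sum.inl k')) :
    Bsq f (f p s, n, some (p, x)) (f p (wordSnoc s k'), n, (none : Lt)) := by
  obtain (a | w) := x
  · by_cases hk : a = k'
    · subst hk; exact Or.inr (Or.inr (Or.inr (Or.inl ⟨n, a, p, s, rfl, rfl⟩)))
    · exact Or.inr (Or.inr (Or.inr (Or.inr (Or.inr (Or.inr
        ⟨(f p s, n, some (p, Sum.inl k')), sq1_mk ⟨h, by simp [hk]⟩, ⟨n, k', p, s, rfl, rfl⟩⟩)))))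
  · exact absurd h (fun h => h)

end AuxProofs
section AuxProofs2

variable {i : Pairt → Set ℕ} {f : Pairt → NWord → ℕ} {φ : ℕ → Pairt}

lemma Bsq_cases {c b : Bt} (h : Bsq f c b) :
    ∃ m n p x, c = (m, n, some (p, x)) ∧
      ((∃ y, b = (m, n, some (p, y)) ∧ Mlt x y) ∨
       b = (m, n, (none : Lt)) ∨
       (∃ w', Mle x (Sum.inr w') ∧ m = p.1.1 ∧ b = (f p w', n + 1, none)) ∨
       (∃ k', Mle x (Sum.inl k') ∧ m = p.1.2 ∧ b = (f p (word1 k'), n + 1, none)) ∨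
       (∃ s k', Mle x (Sum.inl k') ∧ m = f p s ∧ b = (f p (wordSnoc s k'), n, none))) := by
  rcases h with ⟨m, n, u, v, rfl, rfl, hlt⟩ | ⟨n, p, w, rfl, rfl⟩ | ⟨n, k, p, rfl, rfl⟩ |
    ⟨n, k, p, s, rfl, rfl⟩ | ⟨z, hz1, hz2⟩ | ⟨z, hz1, hz2⟩ | ⟨z, hz1, hz2⟩
  · rcases hlt with ⟨hne, rfl⟩ | ⟨p, x, y, rfl, rfl, hxy⟩
    · obtain (_ | pr) := u
      · exact absurd rfl hne
      · exact ⟨m, n, pr.1, pr.2, rfl, Or.inr (Or.inl rfl)⟩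
    · exact ⟨m, n, p, x, rfl, Or.inl ⟨y, rfl, hxy⟩⟩
  · exact ⟨_, n, p, _, rfl, Or.inr (Or.inr (Or.inl ⟨w, mle_refl _, rfl, rfl⟩))⟩
  · exact ⟨_, n, p, _, rfl, Or.inr (Or.inr (Or.inr (Or.inl ⟨k, le_refl k, rfl, rfl⟩)))⟩
  · exact ⟨_, n, p, _, rfl, Or.inr (Or.inr (Or.inr (Or.inr ⟨s, k, le_refl k, rfl, rfl⟩)))⟩
  · obtain ⟨n, p, w, rfl, rfl⟩ := hz2
    obtain ⟨m', n', u, v, rfl, hz, hlt⟩ := hz1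
    obtain ⟨rfl, rfl, rfl⟩ : (p.1.1 : ℕ) = m' ∧ n = n' ∧ some (p, Sum.inr w) = v := by
      simpa only [Prod.mk.injEq] using hz
    rcases hlt with ⟨hne, h0⟩ | ⟨p', x, y, rfl, hv, hxy⟩
    · simp at h0
    · obtain ⟨rfl, rfl⟩ : p = p' ∧ Sum.inr w = y := by
        simpa only [Option.some.injEq, Prod.mk.injEq] using hv
      exact ⟨_, n, p, x, rfl, Or.inr (Or.inr (Or.inl ⟨w, hxy.1, rfl, rfl⟩))⟩
  · obtain ⟨n, k, p, rfl, rfl⟩ := hz2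
    obtain ⟨m', n', u, v, rfl, hz, hlt⟩ := hz1
    obtain ⟨rfl, rfl, rfl⟩ : (p.1.2 : ℕ) = m' ∧ n = n' ∧ some (p, Sum.inl k) = v := by
      simpa only [Prod.mk.injEq] using hz
    rcases hlt with ⟨hne, h0⟩ | ⟨p', x, y, rfl, hv, hxy⟩
    · simp at h0
    · obtain ⟨rfl, rfl⟩ : p = p' ∧ Sum.inl k = y := by
        simpa only [Option.some.injEq, Prod.mk.injEq] using hv
      exact ⟨_, n, p, x, rfl, Or.inr (Or.inr (Or.inr (Or.inl ⟨k, hxy.1, rfl, rfl⟩)))⟩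
  · obtain ⟨n, k, p, s, rfl, rfl⟩ := hz2
    obtain ⟨m', n', u, v, rfl, hz, hlt⟩ := hz1
    obtain ⟨rfl, rfl, rfl⟩ : f p s = m' ∧ n = n' ∧ some (p, Sum.inl k) = v := by
      simpa only [Prod.mk.injEq] using hz
    rcases hlt with ⟨hne, h0⟩ | ⟨p', x, y, rfl, hv, hxy⟩
    · simp at h0
    · obtain ⟨rfl, rfl⟩ : p = p' ∧ Sum.inl k = y := by
        simpa only [Option.some.injEq, Prod.mk.injEq] using hv
      exact ⟨_, n, p, x, rfl, Or.inr (Or.inr (Or.inr (Or.inr ⟨s, k, hxy.1, rfl, rfl⟩)))⟩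

lemma mem_maxB_iff {b : Bt} : b ∈ maxB f ↔ b.2.2 = none := by
  constructor
  · intro hb
    obtain ⟨m, n, l⟩ := b
    obtain (_ | pr) := l
    · rfl
    · have := hb (m, n, none) (Or.inr bsq_hat)
      simp at this
  · intro hb c hc
    obtain (rfl | hsq) := hc
    · rfl
    · obtain ⟨m, n, p, x, hc', -⟩ := Bsq_cases hsq
      rw [hc'] at hb; simp at hb

lemma Bsq_to_none {m₁ n₁ : ℕ} {p₁ : Pairt} {x₁ : Mt} {b : Bt} (hb : b.2.2 = none)
    (h : Bsq f (m₁, n₁, some (p₁, x₁)) b) :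
    b = (m₁, n₁, (none : Lt)) ∨
    (∃ w', Mle x₁ (Sum.inr w') ∧ m₁ = p₁.1.1 ∧ b = (f p₁ w', n₁ + 1, none)) ∨
    (∃ k', Mle x₁ (Sum.inl k') ∧ m₁ = p₁.1.2 ∧ b = (f p₁ (word1 k'), n₁ + 1, none)) ∨
    (∃ s k', Mle x₁ (Sum.inl k') ∧ m₁ = f p₁ s ∧ b = (f p₁ (wordSnoc s k'), n₁, none)) := by
  obtain ⟨m, n, p, x, heq, hcase⟩ := Bsq_cases h
  obtain ⟨rfl, rfl, rfl, rfl⟩ : m₁ = m ∧ n₁ = n ∧ p₁ = p ∧ x₁ = x := by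
    simpa only [Prod.mk.injEq, Option.some.injEq] using heq
  rcases hcase with ⟨y, rfl, -⟩ | h | h | h | h
  · simp at hb
  · exact Or.inl h
  · exact Or.inr (Or.inl h)
  · exact Or.inr (Or.inr (Or.inl h))
  · exact Or.inr (Or.inr (Or.inr h))

lemma Bsq_some_coords {c : Bt} {m' n' : ℕ} {pr' : Pairt × Mt}
    (h : Bsq f c (m', n', some pr')) : c.1 = m' ∧ c.2.1 = n' := by
  obtain ⟨m, n, p, x, rfl, hcase⟩ := Bsq_cases h
  rcases hcase with ⟨y, heq, -⟩ | heq | ⟨w', -, -, heq⟩ | ⟨k', -, -, heq⟩ | ⟨s, k', -, -, heq⟩ <;>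
    simp only [Prod.mk.injEq] at heq <;> simp_all

end AuxProofs2
section AuxProofs3

variable {i : Pairt → Set ℕ} {f : Pairt → NWord → ℕ} {φ : ℕ → Pairt}

lemma le_P1ofB_cases {x : P1t} {b : Bt} (h : P1le f x (P1ofB b)) :
    x = P1ofB b ∨ (∃ c, x = P1ofB c ∧ Bsq f c b) ∨
      (∃ (g : ℕ → ℕ) (n n' : ℕ), n ≤ n' ∧ x = Sum.inl (g, n) ∧ b = (g n', n', none)) := by
  obtain (rfl | h) := h
  · exact Or.inl rfl
  rcases h with ⟨g, n, m, hx, hy, hnm⟩ | ⟨b', c', hx, hy, hsq⟩ | ⟨g, n, hx, hy⟩ |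
    ⟨hne, hy⟩ | ⟨g, n, m, hx, hnm, hy⟩
  · exact absurd hy (by simp [P1ofB])
  · obtain rfl : b = c' := by simpa [P1ofB] using hy
    exact Or.inr (Or.inl ⟨b', hx, hsq⟩)
  · obtain rfl : b = (g n, n, none) := by simpa [P1ofB] using hy
    exact Or.inr (Or.inr ⟨g, n, n, le_refl n, hx, rfl⟩)
  · exact absurd hy (by simp [P1ofB, P1top])
  · obtain rfl : b = (g m, m, none) := by simpa [P1ofB] using hy
    exact Or.inr (Or.inr ⟨g, n, m, le_of_lt hnm, hx, rfl⟩)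

lemma le_P2ofB_cases {y : P2t i φ} {b : Bt} (h : P2le i φ f y (P2ofB i φ b)) :
    y = P2ofB i φ b ∨ (∃ c, y = P2ofB i φ c ∧ Bsq f c b) ∨
      (∃ (g : Xt i φ) (n k n' : ℕ), n ≤ n' ∧ y = Sum.inl (g, n, k) ∧ b = (g.1 n', k, none)) := by
  obtain (rfl | h) := h
  · exact Or.inl rfl
  rcases h with ⟨g, n, m, k, hx, hy, hnm⟩ | ⟨b', c', hx, hy, hsq⟩ | ⟨g, n, k, hx, hy⟩ |
    ⟨hne, hy⟩ | ⟨g, n, m, k, hx, hnm, hy⟩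
  · exact absurd hy (by simp [P2ofB])
  · obtain rfl : b = c' := by simpa [P2ofB] using hy
    exact Or.inr (Or.inl ⟨b', hx, hsq⟩)
  · obtain rfl : b = (g.1 n, k, none) := by simpa [P2ofB] using hy
    exact Or.inr (Or.inr ⟨g, n, k, n, le_refl n, hx, rfl⟩)
  · exact absurd hy (by simp [P2ofB, P2top])
  · obtain rfl : b = (g.1 m, k, none) := by simpa [P2ofB] using hy
    exact Or.inr (Or.inr ⟨g, n, k, m, le_of_lt hnm, hx, rfl⟩)

lemma Bsq_trans_of_some {c c' b : Bt} (h1 : Bsq f c c') (h2 : Bsq f c' b) : Bsq f c b := by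
  obtain ⟨m, n, p, x, rfl, hcase⟩ := Bsq_cases h1
  obtain ⟨m', n', p', x', hc', hcase'⟩ := Bsq_cases h2
  rcases hcase with ⟨y, rfl, hxy⟩ | rfl | ⟨w', -, -, rfl⟩ | ⟨k', -, -, rfl⟩ | ⟨s, k', -, -, rfl⟩
  · obtain ⟨rfl, rfl, rfl, rfl⟩ : m = m' ∧ n = n' ∧ p = p' ∧ y = x' := by
      simpa only [Prod.mk.injEq, Option.some.injEq] using hc'
    rcases hcase' with ⟨y', rfl, hxy'⟩ | rfl | ⟨w', hmle, hm, rfl⟩ | ⟨k', hmle, hm, rfl⟩ |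
      ⟨s, k', hmle, hm, rfl⟩
    · exact Or.inl (sq1_mk (mlt_trans hxy hxy'))
    · exact bsq_hat
    · subst hm; exact bsq_sq2' (mle_trans hxy.1 hmle)
    · subst hm; exact bsq_sq3' (mle_trans hxy.1 hmle)
    · subst hm; exact bsq_sq4' (mle_trans hxy.1 hmle)
  all_goals simp only [Prod.mk.injEq] at hc'; exact absurd hc'.2.2 (by simp)

lemma P1le_BB {c c' : Bt} (h : P1le f (P1ofB c) (P1ofB c')) : c = c' ∨ Bsq f c c' := by
  obtain (heq | hlt) := h
  · exact Or.inl (by simpa [P1ofB] using heq)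
  rcases hlt with ⟨g, n, m, hx, hy, hnm⟩ | ⟨b', c'', hx, hy, hsq⟩ | ⟨g, n, hx, hy⟩ |
    ⟨hne, hy⟩ | ⟨g, n, m, hx, hnm, hy⟩
  · exact absurd hx (by simp [P1ofB])
  · obtain rfl : c = b' := by simpa [P1ofB] using hx
    obtain rfl : c' = c'' := by simpa [P1ofB] using hy
    exact Or.inr hsq
  · exact absurd hx (by simp [P1ofB])
  · exact absurd hy (by simp [P1ofB, P1top])
  · exact absurd hx (by simp [P1ofB])

lemma P2le_BB {c c' : Bt} (h : P2le i φ f (P2ofB i φ c) (P2ofB i φ c')) : c = c' ∨ Bsq f c c' := by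
  obtain (heq | hlt) := h
  · exact Or.inl (by simpa [P2ofB] using heq)
  rcases hlt with ⟨g, n, m, k, hx, hy, hnm⟩ | ⟨b', c'', hx, hy, hsq⟩ | ⟨g, n, k, hx, hy⟩ |
    ⟨hne, hy⟩ | ⟨g, n, m, k, hx, hnm, hy⟩
  · exact absurd hx (by simp [P2ofB])
  · obtain rfl : c = b' := by simpa [P2ofB] using hx
    obtain rfl : c' = c'' := by simpa [P2ofB] using hy
    exact Or.inr hsq
  · exact absurd hx (by simp [P2ofB])
  · exact absurd hy (by simp [P2ofB, P2top])
  · exact absurd hx (by simp [P2ofB])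

lemma P1le_trans_B {x y : P1t} {b : Bt} (h1 : P1le f x y) (h2 : P1le f y (P1ofB b)) :
    P1le f x (P1ofB b) := by
  obtain (rfl | h1) := h1
  · exact h2
  rcases le_P1ofB_cases h2 with rfl | ⟨c, rfl, hsq⟩ | ⟨g, n, n', hn, rfl, rfl⟩
  · exact Or.inr h1
  · -- y = P1ofB c, Bsq c b
    rcases h1 with ⟨g, n, m, hx, hy, hnm⟩ | ⟨b', c'', hx, hy, hsq'⟩ | ⟨g, n, hx, hy⟩ |
      ⟨hne, hy⟩ | ⟨g, n, m, hx, hnm, hy⟩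
    · exact absurd hy (by simp [P1ofB])
    · obtain rfl : c = c'' := by simpa [P1ofB] using hy
      exact Or.inr (Or.inr (Or.inl ⟨b', b, hx, rfl, Bsq_trans_of_some hsq' hsq⟩))
    · obtain rfl : c = (g n, n, none) := by simpa [P1ofB] using hy
      obtain ⟨m', n', p', x', heq, -⟩ := Bsq_cases hsq
      simp at heq
    · exact absurd hy (by simp [P1ofB, P1top])
    · obtain rfl : c = (g m, m, none) := by simpa [P1ofB] using hy
      obtain ⟨m', n', p', x', heq, -⟩ := Bsq_cases hsq
      simp at heq
  · -- y = Sum.inl (g, n), b = (g n', n', none)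
    rcases h1 with ⟨g₀, n₀, m, hx, hy, hnm⟩ | ⟨b', c'', hx, hy, hsq'⟩ | ⟨g₀, n₀, hx, hy⟩ |
      ⟨hne, hy⟩ | ⟨g₀, n₀, m, hx, hnm, hy⟩
    · obtain ⟨rfl, rfl⟩ : g₀ = g ∧ m = n := by simpa using hy.symm
      exact Or.inr (Or.inr (Or.inr (Or.inr (Or.inr ⟨g₀, n₀, n', hx, by omega, rfl⟩))))
    · exact absurd hy (by simp [P1ofB])
    · exact absurd hy (by simp [P1ofB])
    · exact absurd hy (by simp [P1top])
    · exact absurd hy (by simp [P1ofB])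

lemma P2le_trans_B {x y : P2t i φ} {b : Bt} (h1 : P2le i φ f x y) (h2 : P2le i φ f y (P2ofB i φ b)) :
    P2le i φ f x (P2ofB i φ b) := by
  obtain (rfl | h1) := h1
  · exact h2
  rcases le_P2ofB_cases h2 with rfl | ⟨c, rfl, hsq⟩ | ⟨g, n, k, n', hn, rfl, rfl⟩
  · exact Or.inr h1
  · rcases h1 with ⟨g, n, m, k, hx, hy, hnm⟩ | ⟨b', c'', hx, hy, hsq'⟩ | ⟨g, n, k, hx, hy⟩ |
      ⟨hne, hy⟩ | ⟨g, n, m, k, hx, hnm, hy⟩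
    · exact absurd hy (by simp [P2ofB])
    · obtain rfl : c = c'' := by simpa [P2ofB] using hy
      exact Or.inr (Or.inr (Or.inl ⟨b', b, hx, rfl, Bsq_trans_of_some hsq' hsq⟩))
    · obtain rfl : c = (g.1 n, k, none) := by simpa [P2ofB] using hy
      obtain ⟨m', n', p', x', heq, -⟩ := Bsq_cases hsq
      simp at heq
    · exact absurd hy (by simp [P2ofB, P2top])
    · obtain rfl : c = (g.1 m, k, none) := by simpa [P2ofB] using hy
      obtain ⟨m', n', p', x', heq, -⟩ := Bsq_cases hsq
      simp at heq
  · rcases h1 with ⟨g₀, n₀, m, k₀, hx, hy, hnm⟩ | ⟨b', c'', hx, hy, hsq'⟩ | ⟨g₀, n₀, k₀, hx, hy⟩ |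
      ⟨hne, hy⟩ | ⟨g₀, n₀, m, k₀, hx, hnm, hy⟩
    · obtain ⟨rfl, rfl, rfl⟩ : g₀ = g ∧ m = n ∧ k₀ = k := by
        have := hy.symm
        simp only [Sum.inl.injEq, Prod.mk.injEq] at this
        exact ⟨this.1, this.2.1, this.2.2⟩
      exact Or.inr (Or.inr (Or.inr (Or.inr (Or.inr ⟨g₀, n₀, n', k₀, hx, by omega, rfl⟩))))
    · exact absurd hy (by simp [P2ofB])
    · exact absurd hy (by simp [P2ofB])
    · exact absurd hy (by simp [P2top])
    · exact absurd hy (by simp [P2ofB])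

end AuxProofs3
section AuxProofs4

variable {i : Pairt → Set ℕ} {f : Pairt → NWord → ℕ} {φ : ℕ → Pairt}

def Wset (i : Pairt → Set ℕ) (φ : ℕ → Pairt) (f : Pairt → NWord → ℕ) (d : P1t × P2t i φ) :
    Set Bt := {b | b ∈ maxB f ∧ prodLe i φ f d (P1ofB b, P2ofB i φ b)}

lemma mem_Adiag_iff {d : P1t × P2t i φ} : d ∈ Adiag i φ f ↔ (Wset i φ f d).Nonempty :=
  ⟨fun ⟨b, h1, h2⟩ => ⟨b, h1, h2⟩, fun ⟨b, h1, h2⟩ => ⟨b, h1, h2⟩⟩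

lemma mem_Wset_of_Bsq {c₁ c₂ b : Bt} (hb : b.2.2 = none) (h1 : Bsq f c₁ b) (h2 : Bsq f c₂ b) :
    b ∈ Wset i φ f (P1ofB c₁, P2ofB i φ c₂) :=
  ⟨mem_maxB_iff.2 hb, Or.inr (Or.inr (Or.inl ⟨c₁, b, rfl, rfl, h1⟩)),
    Or.inr (Or.inr (Or.inl ⟨c₂, b, rfl, rfl, h2⟩))⟩

lemma f_eq_pair (hif : IFData i f) {p q : Pairt} {u v : NWord} (h : f p u = f q v) :
    p = q ∧ u = v := by
  have hpq : p = q := by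
    by_contra hne
    have h2 : f p u ∈ i q := h ▸ hif.mem q v
    have : f p u ∈ i p ∩ i q := ⟨hif.mem p u, h2⟩
    rw [hif.disj p q hne] at this
    exact this
  subst hpq
  exact ⟨rfl, hif.finj p h⟩

lemma prefix_word1 {w : NWord} {k : ℕ} (h : wordLE w (word1 k)) : w = word1 k := by
  refine Subtype.ext (h.eq_of_length ?_)
  have h1 : w.1.length ≤ (word1 k).1.length := h.length_le
  have h2 : 0 < w.1.length := List.length_pos_iff.2 w.2
  simp only [word1, List.length_singleton] at h1 ⊢
  omega

lemma word1_ne_snoc {k : ℕ} {s : NWord} {k' : ℕ} : word1 k ≠ wordSnoc s k' := by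
  intro h
  have hl : ([k] : List ℕ).length = (s.1 ++ [k']).length := by
    have := congrArg (fun w : NWord => w.1.length) h
    simpa [word1, wordSnoc] using this
  simp only [List.length_singleton, List.length_append] at hl
  exact s.2 (List.length_eq_zero_iff.1 (by omega))

lemma word1_inj {k k' : ℕ} (h : word1 k = word1 k') : k = k' := by
  simpa [word1] using congrArg Subtype.val h

lemma snoc_inj {s₁ s₂ : NWord} {k₁ k₂ : ℕ} (h : wordSnoc s₁ k₁ = wordSnoc s₂ k₂) :
    s₁ = s₂ ∧ k₁ = k₂ := by
  have h' : s₁.1 ++ [k₁] = s₂.1 ++ [k₂] := congrArg Subtype.val h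
  obtain ⟨h1, h2⟩ := List.append_inj' h' rfl
  exact ⟨Subtype.ext h1, by simpa using h2⟩

lemma prefix_snoc_of_two {w s : NWord} {k₁ k₂ : ℕ} (h1 : wordLE w (wordSnoc s k₁))
    (h2 : wordLE w (wordSnoc s k₂)) (hne : k₁ ≠ k₂) : wordLE w s := by
  have h1' : w.1 <+: s.1 ++ [k₁] := h1
  have h2' : w.1 <+: s.1 ++ [k₂] := h2
  by_cases hl : w.1.length ≤ s.1.length
  · exact List.prefix_of_prefix_length_le h1' (List.prefix_append s.1 [k₁]) hl
  · exfalso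
    have hle1 : w.1.length ≤ s.1.length + 1 := by simpa using h1'.length_le
    have e1 : w.1 = s.1 ++ [k₁] := h1'.eq_of_length (by simp; omega)
    have e2 : w.1 = s.1 ++ [k₂] := h2'.eq_of_length (by simp; omega)
    rw [e1] at e2
    exact hne (by simpa using List.append_cancel_left e2)

lemma Bsq_none_src {c b : Bt} (hc : c.2.2 = none) (h : Bsq f c b) : False := by
  obtain ⟨m, n, p, x, rfl, -⟩ := Bsq_cases h
  simp at hc

lemma W_elim_P1 {c₁ b : Bt} (hc : c₁.2.2 ≠ none)
    (h : P1le f (P1ofB c₁) (P1ofB b)) (hb : b.2.2 = none) : Bsq f c₁ b := by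
  rcases P1le_BB h with rfl | hsq
  · exact absurd hb hc
  · exact hsq

lemma W_elim_P2 {c₂ b : Bt} (hc : c₂.2.2 ≠ none)
    (h : P2le i φ f (P2ofB i φ c₂) (P2ofB i φ b)) (hb : b.2.2 = none) : Bsq f c₂ b := by
  rcases P2le_BB h with rfl | hsq
  · exact absurd hb hc
  · exact hsq

lemma W_elim_P1_fn {g : ℕ → ℕ} {n : ℕ} {b : Bt} (h : P1le f (Sum.inl (g, n)) (P1ofB b)) :
    ∃ n', n ≤ n' ∧ b = (g n', n', none) := by
  rcases le_P1ofB_cases h with heq | ⟨c, hc, -⟩ | ⟨g', n₀, n', hle, hx, rfl⟩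
  · exact absurd heq (by simp [P1ofB])
  · exact absurd hc (by simp [P1ofB])
  · obtain ⟨rfl, rfl⟩ : g = g' ∧ n = n₀ := by simpa using hx
    exact ⟨n', hle, rfl⟩

lemma W_elim_P2_fn {g : Xt i φ} {n k : ℕ} {b : Bt}
    (h : P2le i φ f (Sum.inl (g, n, k)) (P2ofB i φ b)) :
    ∃ n', n ≤ n' ∧ b = (g.1 n', k, none) := by
  rcases le_P2ofB_cases h with heq | ⟨c, hc, -⟩ | ⟨g', n₀, k₀, n', hle, hx, rfl⟩
  · exact absurd heq (by simp [P2ofB])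
  · exact absurd hc (by simp [P2ofB])
  · obtain ⟨rfl, rfl, rfl⟩ : g = g' ∧ n = n₀ ∧ k = k₀ := by
      have := hx
      simp only [Sum.inl.injEq, Prod.mk.injEq] at this
      exact this
    exact ⟨n', hle, rfl⟩

lemma W_elim_P1_top {b : Bt} (h : P1le f P1top (P1ofB b)) : False := by
  rcases le_P1ofB_cases h with heq | ⟨c, hc, -⟩ | ⟨g, n, n', -, hx, -⟩
  · exact absurd heq (by simp [P1top, P1ofB])
  · exact absurd hc (by simp [P1top, P1ofB])
  · exact absurd hx (by simp [P1top])

lemma W_elim_P2_top {b : Bt} (h : P2le i φ f (P2top i φ) (P2ofB i φ b)) : False := by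
  rcases le_P2ofB_cases h with heq | ⟨c, hc, -⟩ | ⟨g, n, k, n', -, hx, -⟩
  · exact absurd heq (by simp [P2top, P2ofB])
  · exact absurd hc (by simp [P2top, P2ofB])
  · exact absurd hx (by simp [P2top])

end AuxProofs4
section AuxProofs5

variable {i : Pairt → Set ℕ} {f : Pairt → NWord → ℕ} {φ : ℕ → Pairt}

set_option maxHeartbeats 1000000 in
lemma nine_split {α : Type*} {S : Set α} (hS : S.Infinite) (P1 P2 P3 Q1 Q2 Q3 : α → Prop)
    (h : ∀ b ∈ S, (P1 b ∨ P2 b ∨ P3 b) ∧ (Q1 b ∨ Q2 b ∨ Q3 b)) :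
    {b | P1 b ∧ Q1 b}.Infinite ∨ {b | P1 b ∧ Q2 b}.Infinite ∨ {b | P1 b ∧ Q3 b}.Infinite ∨
    {b | P2 b ∧ Q1 b}.Infinite ∨ {b | P2 b ∧ Q2 b}.Infinite ∨ {b | P2 b ∧ Q3 b}.Infinite ∨
    {b | P3 b ∧ Q1 b}.Infinite ∨ {b | P3 b ∧ Q2 b}.Infinite ∨ {b | P3 b ∧ Q3 b}.Infinite := by
  by_contra hc
  have g1 : {b | P1 b ∧ Q1 b}.Finite := Set.not_infinite.1 fun hi => hc (Or.inl hi)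
  have g2 : {b | P1 b ∧ Q2 b}.Finite := Set.not_infinite.1 fun hi => hc (Or.inr (Or.inl hi))
  have g3 : {b | P1 b ∧ Q3 b}.Finite := Set.not_infinite.1 fun hi => hc (Or.inr (Or.inr (Or.inl hi)))
  have g4 : {b | P2 b ∧ Q1 b}.Finite := Set.not_infinite.1 fun hi => hc (Or.inr (Or.inr (Or.inr (Or.inl hi))))
  have g5 : {b | P2 b ∧ Q2 b}.Finite := Set.not_infinite.1 fun hi => hc (Or.inr (Or.inr (Or.inr (Or.inr (Or.inl hi)))))
  have g6 : {b | P2 b ∧ Q3 b}.Finite := Set.not_infinite.1 fun hi => hc (Or.inr (Or.inr (Or.inr (Or.inr (Or.inr (Or.inl hi))))))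
  have g7 : {b | P3 b ∧ Q1 b}.Finite := Set.not_infinite.1 fun hi => hc (Or.inr (Or.inr (Or.inr (Or.inr (Or.inr (Or.inr (Or.inl hi)))))))
  have g8 : {b | P3 b ∧ Q2 b}.Finite := Set.not_infinite.1 fun hi => hc (Or.inr (Or.inr (Or.inr (Or.inr (Or.inr (Or.inr (Or.inr (Or.inl hi))))))))
  have g9 : {b | P3 b ∧ Q3 b}.Finite := Set.not_infinite.1 fun hi => hc (Or.inr (Or.inr (Or.inr (Or.inr (Or.inr (Or.inr (Or.inr (Or.inr hi))))))))
  refine hS (Set.Finite.subset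
    ((((((((g1.union g2).union g3).union g4).union g5).union g6).union g7).union g8).union g9) ?_)
  intro b hb
  obtain ⟨hP, hQ⟩ := h b hb
  simp only [Set.mem_union, Set.mem_setOf_eq]
  rcases hP with hP | hP | hP <;> rcases hQ with hQ | hQ | hQ <;> tauto

lemma infinite_struct (hif : IFData i f) (hφ : Function.Injective φ)
    {d : P1t × P2t i φ} (hinf : (Wset i φ f d).Infinite) :
    ∃ (m₁ n₁ : ℕ) (pr₁ : Pairt × Mt) (m₂ n₂ : ℕ) (pr₂ : Pairt × Mt),
      d = (P1ofB (m₁, n₁, some pr₁), P2ofB i φ (m₂, n₂, some pr₂)) ∧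
      (if n₂ ≤ n₁ then ((m₁, n₁, none) : Bt) else ((m₂, n₂, none) : Bt)) ∈ Wset i φ f d := by
  classical
  obtain ⟨x, y⟩ := d
  rcases x with ⟨g, k⟩ | c₁ | u
  · -- x of function type : all cases finite
    exfalso
    rcases y with ⟨hh, j, kk⟩ | c₂ | u
    · refine hinf (Set.Finite.subset (Set.finite_singleton ((g kk, kk, (none : Lt)) : Bt)) ?_)
      rintro b ⟨hmax, h1, h2⟩
      obtain ⟨n', hn', rfl⟩ := W_elim_P1_fn h1
      obtain ⟨j', hj', heq⟩ := W_elim_P2_fn h2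
      simp only [Prod.mk.injEq] at heq
      obtain ⟨-, h2', -⟩ := heq
      subst h2'
      rfl
    · rcases c₂ with ⟨m₂, n₂, l₂⟩
      rcases l₂ with _ | pr₂
      · refine hinf (Set.Finite.subset (Set.finite_singleton ((m₂, n₂, (none : Lt)) : Bt)) ?_)
        rintro b ⟨hmax, h1, h2⟩
        rcases P2le_BB h2 with heq | hsq
        · exact heq.symm
        · exact absurd hsq (fun h => Bsq_none_src rfl h)
      · refine hinf (Set.Finite.subset
          (Set.Finite.insert ((g (n₂+1), n₂+1, (none : Lt)) : Bt)
            (Set.finite_singleton ((g n₂, n₂, (none : Lt)) : Bt))) ?_)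
        rintro b ⟨hmax, h1, h2⟩
        obtain ⟨n', hn', rfl⟩ := W_elim_P1_fn h1
        obtain ⟨p₂, x₂⟩ := pr₂
        have hsq := W_elim_P2 (by simp) h2 rfl
        have hn2 : n' = n₂ ∨ n' = n₂ + 1 := by
          rcases Bsq_to_none rfl hsq with heq | ⟨w', -, -, heq⟩ | ⟨k', -, -, heq⟩ |
            ⟨s, k', -, -, heq⟩
          · simp only [Prod.mk.injEq] at heq; exact Or.inl heq.2.1
          · simp only [Prod.mk.injEq] at heq; exact Or.inr heq.2.1
          · simp only [Prod.mk.injEq] at heq; exact Or.inr heq.2.1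
          · simp only [Prod.mk.injEq] at heq; exact Or.inl heq.2.1
        rcases hn2 with rfl | rfl
        · simp
        · simp
    · cases u
      obtain ⟨b, hb⟩ := hinf.nonempty
      exact W_elim_P2_top hb.2.2
  · -- x = P1ofB c₁
    rcases c₁ with ⟨m₁, n₁, l₁⟩
    rcases l₁ with _ | pr₁
    · exfalso
      refine hinf (Set.Finite.subset (Set.finite_singleton ((m₁, n₁, (none : Lt)) : Bt)) ?_)
      rintro b ⟨hmax, h1, h2⟩
      rcases P1le_BB h1 with heq | hsq
      · exact heq.symm
      · exact absurd hsq (fun h => Bsq_none_src rfl h)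
    · obtain ⟨p₁, x₁⟩ := pr₁
      rcases y with ⟨hh, j, kk⟩ | c₂ | u
      · -- y of function type : finite
        exfalso
        have hS : ({b : Bt | ∃ j', φ j' = p₁ ∧ b = (hh.1 j', kk, (none : Lt))}).Subsingleton := by
          rintro a ⟨j₁, hj₁, rfl⟩ b ⟨j₂, hj₂, rfl⟩
          obtain rfl : j₁ = j₂ := hφ (hj₁.trans hj₂.symm)
          rfl
        refine hinf (Set.Finite.subset
          ((Set.finite_singleton ((m₁, n₁, (none : Lt)) : Bt)).union hS.finite) ?_)
        rintro b ⟨hmax, h1, h2⟩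
        obtain ⟨j', hj', rfl⟩ := W_elim_P2_fn h2
        have hsq := W_elim_P1 (by simp) h1 rfl
        have key : ∀ (u : NWord), hh.1 j' = f p₁ u → φ j' = p₁ := by
          intro u hu
          by_contra hne
          have hmem : hh.1 j' ∈ i (φ j') ∩ i p₁ := ⟨hh.2 j', hu ▸ hif.mem p₁ u⟩
          rw [hif.disj _ _ hne] at hmem
          exact hmem
        rcases Bsq_to_none rfl hsq with heq | ⟨w', -, -, heq⟩ | ⟨k', -, -, heq⟩ |
          ⟨s, k', -, -, heq⟩
        · exact Set.mem_union_left _ heq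
        · simp only [Prod.mk.injEq] at heq
          exact Set.mem_union_right _ ⟨j', key w' heq.1, rfl⟩
        · simp only [Prod.mk.injEq] at heq
          exact Set.mem_union_right _ ⟨j', key (word1 k') heq.1, rfl⟩
        · simp only [Prod.mk.injEq] at heq
          exact Set.mem_union_right _ ⟨j', key (wordSnoc s k') heq.1, rfl⟩
      · rcases c₂ with ⟨m₂, n₂, l₂⟩
        rcases l₂ with _ | pr₂
        · exfalso
          refine hinf (Set.Finite.subset (Set.finite_singleton ((m₂, n₂, (none : Lt)) : Bt)) ?_)
          rintro b ⟨hmax, h1, h2⟩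
          rcases P2le_BB h2 with heq | hsq
          · exact heq.symm
          · exact absurd hsq (fun h => Bsq_none_src rfl h)
        · -- MAIN CASE
          obtain ⟨p₂, x₂⟩ := pr₂
          refine ⟨m₁, n₁, (p₁, x₁), m₂, n₂, (p₂, x₂), rfl, ?_⟩
          have hWc : ((Wset i φ f (P1ofB (m₁, n₁, some (p₁, x₁)),
              P2ofB i φ (m₂, n₂, some (p₂, x₂)))) \
              {((m₁, n₁, none) : Bt), ((m₂, n₂, none) : Bt)}).Infinite :=
            hinf.diff ((Set.finite_singleton _).insert _)
          have h9 := nine_split hWc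
            (fun b => ∃ w', Mle x₁ (Sum.inr w') ∧ m₁ = p₁.1.1 ∧ b = (f p₁ w', n₁ + 1, none))
            (fun b => ∃ k', Mle x₁ (Sum.inl k') ∧ m₁ = p₁.1.2 ∧ b = (f p₁ (word1 k'), n₁ + 1, none))
            (fun b => ∃ s k', Mle x₁ (Sum.inl k') ∧ m₁ = f p₁ s ∧ b = (f p₁ (wordSnoc s k'), n₁, none))
            (fun b => ∃ w', Mle x₂ (Sum.inr w') ∧ m₂ = p₂.1.1 ∧ b = (f p₂ w', n₂ + 1, none))
            (fun b => ∃ k', Mle x₂ (Sum.inl k') ∧ m₂ = p₂.1.2 ∧ b = (f p₂ (word1 k'), n₂ + 1, none))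
            (fun b => ∃ s k', Mle x₂ (Sum.inl k') ∧ m₂ = f p₂ s ∧ b = (f p₂ (wordSnoc s k'), n₂, none))
            (by
              rintro b ⟨hbW, hbne⟩
              have hbn : b.2.2 = none := mem_maxB_iff.1 hbW.1
              have hs1 := Bsq_to_none hbn (W_elim_P1 (by simp) hbW.2.1 hbn)
              have hs2 := Bsq_to_none hbn (W_elim_P2 (by simp) hbW.2.2 hbn)
              constructor
              · rcases hs1 with rfl | h | h | h
                · exact absurd (by simp) hbne
                · exact Or.inl h
                · exact Or.inr (Or.inl h)
                · exact Or.inr (Or.inr h)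
              · rcases hs2 with rfl | h | h | h
                · exact absurd (by simp) hbne
                · exact Or.inl h
                · exact Or.inr (Or.inl h)
                · exact Or.inr (Or.inr h))
          rcases h9 with h | h | h | h | h | h | h | h | h
          · -- (1,1)
            obtain ⟨b, ⟨w₁', hx1, hmp1, rfl⟩, ⟨w₂', hx2, hmp2, heq⟩⟩ := h.nonempty
            simp only [Prod.mk.injEq] at heq
            obtain ⟨hf1, hn, -⟩ := heq
            obtain ⟨rfl, -⟩ := f_eq_pair hif hf1
            obtain rfl : n₂ = n₁ := by omega
            obtain rfl : m₂ = m₁ := by rw [hmp1]; exact hmp2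
            rw [if_pos le_rfl]
            exact mem_Wset_of_Bsq rfl bsq_hat bsq_hat
          · -- (1,2)
            exfalso
            obtain ⟨b, ⟨⟨w₁', hx1, hmp1, rfl⟩, ⟨k₂', hx2, hmp2, heq⟩⟩,
              b', ⟨⟨w₁'', hx1', -, rfl⟩, ⟨k₂'', hx2', -, heq'⟩⟩, hne⟩ := h.nontrivial
            simp only [Prod.mk.injEq] at heq heq'
            obtain ⟨hf1, -, -⟩ := heq
            obtain ⟨hf1', -, -⟩ := heq'
            obtain ⟨rfl, rfl⟩ := f_eq_pair hif hf1
            obtain ⟨-, rfl⟩ := f_eq_pair hif hf1'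
            obtain (a | wx) := x₁
            · exact absurd hx1 (fun h => h)
            · have e1 : wx = word1 k₂' := prefix_word1 hx1
              have e2 : wx = word1 k₂'' := prefix_word1 hx1'
              obtain rfl : k₂' = k₂'' := word1_inj (e1.symm.trans e2)
              exact hne rfl
          · -- (1,3)
            obtain ⟨b, ⟨⟨w₁', hx1, hmp1, rfl⟩, ⟨s, k', hx2, hm2, heq⟩⟩,
              b', ⟨⟨w₁'', hx1', -, rfl⟩, ⟨s', k'', hx2', hm2', heq'⟩⟩, hne⟩ := h.nontrivial
            simp only [Prod.mk.injEq] at heq heq'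
            obtain ⟨hf1, hn, -⟩ := heq
            obtain ⟨hf1', -, -⟩ := heq'
            obtain ⟨rfl, rfl⟩ := f_eq_pair hif hf1
            obtain ⟨-, rfl⟩ := f_eq_pair hif hf1'
            obtain rfl : s = s' := hif.finj p₁ (hm2.symm.trans hm2')
            have hkne : k' ≠ k'' := by rintro rfl; exact hne rfl
            obtain (a | wx) := x₁
            · exact absurd hx1 (fun h => h)
            · have hws : wordLE wx s := prefix_snoc_of_two hx1 hx1' hkne
              subst hmp1
              subst hm2
              obtain rfl : n₂ = n₁ + 1 := hn.symm
              rw [if_neg (by omega)]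
              exact mem_Wset_of_Bsq rfl (bsq_sq2' hws) bsq_hat
          · -- (2,1)
            exfalso
            obtain ⟨b, ⟨⟨k₁', hx1, hmp1, rfl⟩, ⟨w₂', hx2, hmp2, heq⟩⟩,
              b', ⟨⟨k₁'', hx1', -, rfl⟩, ⟨w₂'', hx2', -, heq'⟩⟩, hne⟩ := h.nontrivial
            simp only [Prod.mk.injEq] at heq heq'
            obtain ⟨hf1, -, -⟩ := heq
            obtain ⟨hf1', -, -⟩ := heq'
            obtain ⟨rfl, rfl⟩ := f_eq_pair hif hf1
            obtain ⟨-, rfl⟩ := f_eq_pair hif hf1'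
            obtain (a | wx) := x₂
            · exact absurd hx2 (fun h => h)
            · have e1 : wx = word1 k₁' := prefix_word1 hx2
              have e2 : wx = word1 k₁'' := prefix_word1 hx2'
              obtain rfl : k₁' = k₁'' := word1_inj (e1.symm.trans e2)
              exact hne rfl
          · -- (2,2)
            obtain ⟨b, ⟨k₁', hx1, hmp1, rfl⟩, ⟨k₂', hx2, hmp2, heq⟩⟩ := h.nonempty
            simp only [Prod.mk.injEq] at heq
            obtain ⟨hf1, hn, -⟩ := heq
            obtain ⟨rfl, -⟩ := f_eq_pair hif hf1
            obtain rfl : n₂ = n₁ := by omega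
            obtain rfl : m₂ = m₁ := by rw [hmp1]; exact hmp2
            rw [if_pos le_rfl]
            exact mem_Wset_of_Bsq rfl bsq_hat bsq_hat
          · -- (2,3)
            exfalso
            obtain ⟨b, ⟨k₁', hx1, hmp1, rfl⟩, ⟨s, k', hx2, hm2, heq⟩⟩ := h.nonempty
            simp only [Prod.mk.injEq] at heq
            obtain ⟨hf1, -, -⟩ := heq
            obtain ⟨rfl, hw⟩ := f_eq_pair hif hf1
            exact word1_ne_snoc hw
          · -- (3,1)
            obtain ⟨b, ⟨⟨s, k', hx1, hm1, rfl⟩, ⟨w₂', hx2, hmp2, heq⟩⟩,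
              b', ⟨⟨s', k'', hx1', hm1', rfl⟩, ⟨w₂'', hx2', -, heq'⟩⟩, hne⟩ := h.nontrivial
            simp only [Prod.mk.injEq] at heq heq'
            obtain ⟨hf1, hn, -⟩ := heq
            obtain ⟨hf1', -, -⟩ := heq'
            obtain ⟨rfl, rfl⟩ := f_eq_pair hif hf1
            obtain ⟨-, rfl⟩ := f_eq_pair hif hf1'
            obtain rfl : s = s' := hif.finj p₁ (hm1.symm.trans hm1')
            have hkne : k' ≠ k'' := by rintro rfl; exact hne rfl
            obtain (a | wx) := x₂
            · exact absurd hx2 (fun h => h)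
            · have hws : wordLE wx s := prefix_snoc_of_two hx2 hx2' hkne
              subst hm1
              subst hmp2
              obtain rfl : n₁ = n₂ + 1 := hn
              rw [if_pos (by omega)]
              exact mem_Wset_of_Bsq rfl bsq_hat (bsq_sq2' hws)
          · -- (3,2)
            exfalso
            obtain ⟨b, ⟨s, k', hx1, hm1, rfl⟩, ⟨k₂', hx2, hmp2, heq⟩⟩ := h.nonempty
            simp only [Prod.mk.injEq] at heq
            obtain ⟨hf1, -, -⟩ := heq
            obtain ⟨rfl, hw⟩ := f_eq_pair hif hf1
            exact word1_ne_snoc hw.symm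
          · -- (3,3)
            obtain ⟨b, ⟨s, k', hx1, hm1, rfl⟩, ⟨s₂, k₂', hx2, hm2, heq⟩⟩ := h.nonempty
            simp only [Prod.mk.injEq] at heq
            obtain ⟨hf1, hn, -⟩ := heq
            obtain ⟨rfl, hw⟩ := f_eq_pair hif hf1
            obtain ⟨rfl, -⟩ := snoc_inj hw.symm
            obtain rfl : n₂ = n₁ := hn.symm
            obtain rfl : m₂ = m₁ := by rw [hm1]; exact hm2
            rw [if_pos le_rfl]
            exact mem_Wset_of_Bsq rfl bsq_hat bsq_hat
      · exfalso
        cases u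
        obtain ⟨b, hb⟩ := hinf.nonempty
        exact W_elim_P2_top hb.2.2
  · exfalso
    cases u
    obtain ⟨b, hb⟩ := hinf.nonempty
    exact W_elim_P1_top hb.2.1

lemma shape_le {m₁ n₁ m₂ n₂ m₁' n₁' m₂' n₂' : ℕ} {pr₁ pr₂ pr₁' pr₂' : Pairt × Mt}
    (h : prodLe i φ f (P1ofB (m₁, n₁, some pr₁), P2ofB i φ (m₂, n₂, some pr₂))
      (P1ofB (m₁', n₁', some pr₁'), P2ofB i φ (m₂', n₂', some pr₂'))) :
    m₁ = m₁' ∧ n₁ = n₁' ∧ m₂ = m₂' ∧ n₂ = n₂' := by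
  obtain ⟨h1, h2⟩ := h
  have e1 : m₁ = m₁' ∧ n₁ = n₁' := by
    rcases P1le_BB h1 with heq | hsq
    · simp only [Prod.mk.injEq] at heq
      exact ⟨heq.1, heq.2.1⟩
    · exact Bsq_some_coords hsq
  have e2 : m₂ = m₂' ∧ n₂ = n₂' := by
    rcases P2le_BB h2 with heq | hsq
    · simp only [Prod.mk.injEq] at heq
      exact ⟨heq.1, heq.2.1⟩
    · exact Bsq_some_coords hsq
  exact ⟨e1.1, e1.2, e2.1, e2.2⟩

end AuxProofs5
/-- The set `A = ↓{(a, a) : a ∈ max B} ⊆ P₁ × P₂` is Scott closed: it is a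
lower set in the product order and for every directed subset `D` of `A`, `sup D ∈ A`. -/
theorem Adiag_scottClosed (i : Pairt → Set ℕ) (f : Pairt → NWord → ℕ)
    (φ : ℕ → Pairt) (hif : IFData i f) (hφ : Function.Bijective φ) :
    (∀ x y : P1t × P2t i φ, prodLe i φ f x y → y ∈ Adiag i φ f → x ∈ Adiag i φ f) ∧
    ∀ D : Set (P1t × P2t i φ), ∀ u : P1t × P2t i φ, D ⊆ Adiag i φ f →
      DirectedOn' (prodLe i φ f) D → IsLub' (prodLe i φ f) D u → u ∈ Adiag i φ f := by
  constructor
  · rintro x y hxy ⟨b, hbmax, hb1, hb2⟩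
    exact ⟨b, hbmax, P1le_trans_B hxy.1 hb1, P2le_trans_B hxy.2 hb2⟩
  · intro D u hDA hdir hlub
    have key : ∃ b ∈ maxB f, ∀ d ∈ D, prodLe i φ f d (P1ofB b, P2ofB i φ b) := by
      by_cases hfin : ∃ d ∈ D, (Wset i φ f d).Finite
      · -- some element with finitely many diagonal upper bounds
        have hTne : {n : ℕ | ∃ d ∈ D, (Wset i φ f d).Finite ∧ (Wset i φ f d).ncard = n}.Nonempty := by
          obtain ⟨d₁, hd₁D, hd₁fin⟩ := hfin
          exact ⟨_, d₁, hd₁D, hd₁fin, rfl⟩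
        obtain ⟨d₀, hd₀D, hd₀fin, hd₀card⟩ := Nat.sInf_mem hTne
        obtain ⟨b, hbW⟩ : (Wset i φ f d₀).Nonempty := mem_Adiag_iff.1 (hDA hd₀D)
        refine ⟨b, hbW.1, fun d hd => ?_⟩
        obtain ⟨e, heD, hde, hd₀e⟩ := hdir.2 d hd d₀ hd₀D
        have hsub : Wset i φ f e ⊆ Wset i φ f d₀ := by
          rintro b' ⟨hb'max, hb'1, hb'2⟩
          exact ⟨hb'max, P1le_trans_B hd₀e.1 hb'1, P2le_trans_B hd₀e.2 hb'2⟩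
        have hefin : (Wset i φ f e).Finite := hd₀fin.subset hsub
        have hle1 : sInf {n : ℕ | ∃ d ∈ D, (Wset i φ f d).Finite ∧ (Wset i φ f d).ncard = n} ≤
            (Wset i φ f e).ncard := Nat.sInf_le ⟨e, heD, hefin, rfl⟩
        have heq : Wset i φ f e = Wset i φ f d₀ :=
          Set.eq_of_subset_of_ncard_le hsub (by rw [hd₀card]; exact hle1) hd₀fin
        have hbWe : b ∈ Wset i φ f e := heq ▸ hbW
        exact ⟨P1le_trans_B hde.1 hbWe.2.1, P2le_trans_B hde.2 hbWe.2.2⟩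
      · -- all elements have infinitely many diagonal upper bounds
        push_neg at hfin
        obtain ⟨d₁, hd₁D⟩ := hdir.1
        obtain ⟨m₁, n₁, pr₁, m₂, n₂, pr₂, hd₁eq, hbW⟩ :=
          infinite_struct hif hφ.1 (hfin d₁ hd₁D)
        refine ⟨_, hbW.1, fun d hd => ?_⟩
        obtain ⟨e, heD, hde, hd₁e⟩ := hdir.2 d hd d₁ hd₁D
        obtain ⟨m₁', n₁', pr₁', m₂', n₂', pr₂', heeq, hbW'⟩ :=
          infinite_struct hif hφ.1 (hfin e heD)
        have hco : m₁ = m₁' ∧ n₁ = n₁' ∧ m₂ = m₂' ∧ n₂ = n₂' := by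
          apply shape_le (pr₁ := pr₁) (pr₂ := pr₂) (pr₁' := pr₁') (pr₂' := pr₂')
          rw [hd₁eq, heeq] at hd₁e
          exact hd₁e
        obtain ⟨rfl, rfl, rfl, rfl⟩ := hco
        exact ⟨P1le_trans_B hde.1 hbW'.2.1, P2le_trans_B hde.2 hbW'.2.2⟩
    obtain ⟨b, hbmax, hball⟩ := key
    exact ⟨b, hbmax, hlub.2 _ hball⟩
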